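/- Let n ≥ 1, let H : EuclideanSpace ℝ (Fin n) × EuclideanSpace ℝ (Fin n) × ℝ → ℝ be continuously differentiable, and let S : EuclideanSpace ℝ (Fin n) × ℝ → ℝ be twice continuously differentiable and satisfy the Hamilton–Jacobi equation ∂S/∂t (q,t) + H(q, ∇_q S(q,t), t) = 0 for all (q,t). Suppose q : ℝ → EuclideanSpace ℝ (Fin n) is differentiable and solves the characteristic equation q'(t) = ∂H/∂p (q(t), ∇_q S(q(t),t), t) for all t. Then the momentum p(t) := ∇_q S(q(t),t) is differentiable and satisfies p'(t) = −∂H/∂q (q(t), p(t), t) for all t; that is, the pair (q(t), p(t)) solves Hamilton's equations of motion. -/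

import Mathlib

open ContinuousLinearMap InnerProductSpace
open scoped RealInnerProductSpace

set_option maxHeartbeats 1000000 in
theorem jacobi_aux {E : Type*} [NormedAddCommGroup E] [InnerProductSpace ℝ E] [CompleteSpace E]
    (H : E × E × ℝ → ℝ) (hH : ContDiff ℝ 1 H)
    (S : E × ℝ → ℝ) (hS : ContDiff ℝ 2 S)
    (hHJE : ∀ (q : E) (t : ℝ),
      deriv (fun τ => S (q, τ)) t + H (q, gradient (fun x => S (x, t)) q, t) = 0)
    (q : ℝ → E) (hq : Differentiable ℝ q)
    (hchar : ∀ t : ℝ,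
      deriv q t = gradient (fun pp => H (q t, pp, t)) (gradient (fun x => S (x, t)) (q t)))
    (p : ℝ → E) (hp : ∀ t : ℝ, p t = gradient (fun x => S (x, t)) (q t)) :
    Differentiable ℝ p ∧
      ∀ t : ℝ, deriv p t = -gradient (fun x => H (x, p t, t)) (q t) := by
  classical
  set L : ((E × ℝ) →L[ℝ] ℝ) →L[ℝ] E :=
    ((toDual ℝ E).symm.toContinuousLinearEquiv.toContinuousLinearMap).comp
      ((compL ℝ E (E × ℝ) ℝ).flip (inl ℝ E ℝ)) with hLdef
  have hLapp : ∀ (φ : (E × ℝ) →L[ℝ] ℝ) (v : E), ⟪L φ, v⟫ = φ (v, 0) := by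
    intro φ v
    simp [hLdef, toDual_symm_apply]
  have hSdiff : Differentiable ℝ S := hS.differentiable (by norm_num)
  have hHdiff : Differentiable ℝ H := hH.differentiable (by norm_num)
  have hgradS : ∀ (x : E) (t : ℝ),
      HasGradientAt (fun y => S (y, t)) (L (fderiv ℝ S (x, t))) x := by
    intro x t
    have h1 : HasFDerivAt (fun y : E => S (y, t))
        ((fderiv ℝ S (x, t)).comp (inl ℝ E ℝ)) x :=
      (hSdiff (x, t)).hasFDerivAt.comp x (hasFDerivAt_prodMk_left x t)
    have h2 := h1.hasGradientAt
    convert h2 using 2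
    simp [hLdef]
  have hgradSeq : ∀ (x : E) (t : ℝ),
      gradient (fun y => S (y, t)) x = L (fderiv ℝ S (x, t)) :=
    fun x t => (hgradS x t).gradient
  set Fm : E × ℝ → E := fun z => L (fderiv ℝ S z) with hFmdef
  have hdS : ContDiff ℝ 1 (fderiv ℝ S) := hS.fderiv_right (by norm_num)
  have hFm : ContDiff ℝ 1 Fm := by
    rw [hFmdef]; exact L.contDiff.comp hdS
  have hpeq : p = fun t => Fm (q t, t) := by
    funext t
    rw [hp t, hgradSeq]
  have hpdiff : Differentiable ℝ p := by
    rw [hpeq]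
    exact (hFm.differentiable (by norm_num)).comp (hq.prodMk differentiable_id)
  refine ⟨hpdiff, fun t₀ => ?_⟩
  set z₀ : E × ℝ := (q t₀, t₀) with hz₀
  set A : (E × ℝ) →L[ℝ] (E × ℝ) →L[ℝ] ℝ := fderiv ℝ (fderiv ℝ S) z₀ with hAdef
  have hA : HasFDerivAt (fderiv ℝ S) A z₀ := ((hdS.differentiable (by norm_num)) z₀).hasFDerivAt
  have hFm' : HasFDerivAt Fm (L.comp A) z₀ := by
    rw [hFmdef]; convert L.hasFDerivAt.comp z₀ (hdS.differentiable (by norm_num) z₀).hasFDerivAt using 1 <;> rfl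
  have hzc : HasDerivAt (fun t => ((q t, t) : E × ℝ)) (deriv q t₀, 1) t₀ :=
    (hq t₀).hasDerivAt.prodMk (hasDerivAt_id t₀)
  have hFm'' : HasFDerivAt Fm (L.comp A) ((q t₀, t₀) : E × ℝ) := hz₀ ▸ hFm'
  have hpd : HasDerivAt (fun t => Fm (q t, t)) ((L.comp A) (deriv q t₀, 1)) t₀ :=
    HasFDerivAt.comp_hasDerivAt (f := fun t => ((q t, t) : E × ℝ)) t₀ hFm'' hzc
  have hderivp : deriv p t₀ = L (A (deriv q t₀, 1)) := by
    rw [hpeq]; exact hpd.deriv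
  have hSt : ∀ (x : E) (t : ℝ),
      deriv (fun τ => S (x, τ)) t = fderiv ℝ S (x, t) (0, 1) := by
    intro x t
    have h1 : HasFDerivAt (fun τ : ℝ => S (x, τ))
        ((fderiv ℝ S (x, t)).comp (inr ℝ E ℝ)) t :=
      (hSdiff (x, t)).hasFDerivAt.comp t (hasFDerivAt_prodMk_right x t)
    have := h1.hasDerivAt.deriv
    simpa using this
  have hHJE' : ∀ z : E × ℝ, fderiv ℝ S z (0, 1) + H (z.1, Fm z, z.2) = 0 := by
    intro z
    have := hHJE z.1 z.2
    rwa [hSt, hgradSeq] at this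
  set B : (E × E × ℝ) →L[ℝ] ℝ := fderiv ℝ H (z₀.1, Fm z₀, z₀.2) with hBdef
  have hB : HasFDerivAt H B (z₀.1, Fm z₀, z₀.2) := (hHdiff _).hasFDerivAt
  have hΨ : HasFDerivAt (fun z : E × ℝ => ((z.1, Fm z, z.2) : E × E × ℝ))
      ((fst ℝ E ℝ).prod ((L.comp A).prod (snd ℝ E ℝ))) z₀ :=
    (hasFDerivAt_fst).prodMk (hFm'.prodMk hasFDerivAt_snd)
  have hterm1 : HasFDerivAt (fun z : E × ℝ => fderiv ℝ S z (0, 1))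
      ((ContinuousLinearMap.apply ℝ ℝ ((0, 1) : E × ℝ)).comp A) z₀ :=
    (ContinuousLinearMap.apply ℝ ℝ ((0, 1) : E × ℝ)).hasFDerivAt.comp z₀ hA
  have hterm2 : HasFDerivAt (fun z : E × ℝ => H (z.1, Fm z, z.2))
      (B.comp ((fst ℝ E ℝ).prod ((L.comp A).prod (snd ℝ E ℝ)))) z₀ :=
    hB.comp z₀ hΨ
  have hg : HasFDerivAt (fun z : E × ℝ => fderiv ℝ S z (0, 1) + H (z.1, Fm z, z.2))
      (((ContinuousLinearMap.apply ℝ ℝ ((0, 1) : E × ℝ)).comp A)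
        + B.comp ((fst ℝ E ℝ).prod ((L.comp A).prod (snd ℝ E ℝ)))) z₀ :=
    hterm1.add hterm2
  have hgzero : (fun z : E × ℝ => fderiv ℝ S z (0, 1) + H (z.1, Fm z, z.2))
      = fun _ => (0 : ℝ) := funext hHJE'
  have hDzero : (((ContinuousLinearMap.apply ℝ ℝ ((0, 1) : E × ℝ)).comp A)
        + B.comp ((fst ℝ E ℝ).prod ((L.comp A).prod (snd ℝ E ℝ)))) = 0 := by
    rw [hgzero] at hg
    exact hg.unique (hasFDerivAt_const 0 z₀)
  have key : ∀ w : E × ℝ, A w (0, 1) + B (w.1, L (A w), w.2) = 0 := by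
    intro w
    have := congrArg (fun D : (E × ℝ) →L[ℝ] ℝ => D w) hDzero
    simpa using this
  have hsym : ∀ a b : E × ℝ, A a b = A b a :=
    hS.contDiffAt.isSymmSndFDerivAt (by simp [minSmoothness_of_isRCLikeNormedField])
  set p₀ : E := p t₀ with hp₀
  have hp₀Fm : p₀ = Fm z₀ := by rw [hp₀, hp t₀, hgradSeq]
  have hΨz₀ : ((z₀.1, Fm z₀, z₀.2) : E × E × ℝ) = (q t₀, p₀, t₀) := by
    rw [hp₀Fm]
  have hB' : HasFDerivAt H B ((q t₀, p₀, t₀) : E × E × ℝ) := by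
    rw [← hΨz₀]; exact hB
  set gq : E := gradient (fun x => H (x, p₀, t₀)) (q t₀) with hgq
  set gp : E := gradient (fun pp => H (q t₀, pp, t₀)) p₀ with hgp
  have hBq : ∀ v : E, ⟪gq, v⟫ = B (v, 0, 0) := by
    intro v
    have h1 : HasFDerivAt (fun x : E => H (x, p₀, t₀))
        (B.comp (inl ℝ E (E × ℝ))) (q t₀) :=
      hB'.comp (q t₀) (hasFDerivAt_prodMk_left (q t₀) ((p₀, t₀) : E × ℝ))
    have h2 := h1.hasGradientAt.gradient
    rw [hgq, h2, toDual_symm_apply]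
    simp
    rfl
  have hBp : ∀ u : E, ⟪gp, u⟫ = B (0, u, 0) := by
    intro u
    have hm : HasFDerivAt (fun pp : E => ((q t₀, pp, t₀) : E × E × ℝ))
        ((inr ℝ E (E × ℝ)).comp (inl ℝ E ℝ)) p₀ :=
      (hasFDerivAt_prodMk_right (q t₀) ((p₀, t₀) : E × ℝ)).comp p₀
        (hasFDerivAt_prodMk_left p₀ t₀)
    have h1 : HasFDerivAt (fun pp : E => H (q t₀, pp, t₀))
        (B.comp ((inr ℝ E (E × ℝ)).comp (inl ℝ E ℝ))) p₀ :=
      hB'.comp p₀ hm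
    have h2 := h1.hasGradientAt.gradient
    rw [hgp, h2, toDual_symm_apply]
    simp
  have hqd : deriv q t₀ = gp := by
    rw [hchar t₀, hgp, hp₀, hp t₀]
  have final : ∀ v : E, ⟪deriv p t₀, v⟫ = ⟪-gq, v⟫ := by
    intro v
    have e1 : ⟪deriv p t₀, v⟫ = A (deriv q t₀, 1) (v, 0) := by
      rw [hderivp]; exact hLapp _ v
    have e2 : A (deriv q t₀, 1) (v, 0) = A (v, 0) (gp, 0) + A (v, 0) (0, 1) := by
      rw [hsym (deriv q t₀, 1) (v, 0), hqd]
      have h : ((gp, 1) : E × ℝ) = (gp, 0) + (0, 1) := by simp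
      rw [h, map_add]
    have e3 : A (v, 0) (0, 1) = -(B (v, 0, 0) + B (0, L (A (v, 0)), 0)) := by
      have hk := key (v, 0)
      have hsplit : ((v, L (A (v, 0)), (0 : ℝ)) : E × E × ℝ)
          = ((v, 0, 0) : E × E × ℝ) + ((0, L (A (v, 0)), 0) : E × E × ℝ) := by
        simp
      rw [hsplit, map_add] at hk
      linarith
    have e4 : B (0, L (A (v, 0)), 0) = A (v, 0) (gp, 0) := by
      rw [← hBp (L (A (v, 0))), real_inner_comm]
      exact hLapp _ gp
    rw [e1, e2, e3, e4, ← hBq v, inner_neg_left]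
    ring
  have hfin := ext_inner_right ℝ final
  rw [hfin]

/-- Jacobi's type-2 method: a C² solution `S` of the Hamilton–Jacobi equation yields, via the
method of characteristics (with momentum `p(t) = ∇_q S(q(t),t)`), solutions of Hamilton's
equations of motion: `p` is differentiable and `p'(t) = −∂H/∂q (q(t), p(t), t)`. -/
theorem jacobi_characteristics_solve_hamiltons_equations
    (n : ℕ) (hn : 1 ≤ n)
    (H : EuclideanSpace ℝ (Fin n) × EuclideanSpace ℝ (Fin n) × ℝ → ℝ)
    (hH : ContDiff ℝ 1 H)
    (S : EuclideanSpace ℝ (Fin n) × ℝ → ℝ)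
    (hS : ContDiff ℝ 2 S)
    (hHJE : ∀ (q : EuclideanSpace ℝ (Fin n)) (t : ℝ),
      deriv (fun τ => S (q, τ)) t + H (q, gradient (fun x => S (x, t)) q, t) = 0)
    (q : ℝ → EuclideanSpace ℝ (Fin n))
    (hq : Differentiable ℝ q)
    (hchar : ∀ t : ℝ,
      deriv q t
        = gradient (fun pp => H (q t, pp, t)) (gradient (fun x => S (x, t)) (q t)))
    (p : ℝ → EuclideanSpace ℝ (Fin n))
    (hp : ∀ t : ℝ, p t = gradient (fun x => S (x, t)) (q t)) :
    Differentiable ℝ p ∧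
      ∀ t : ℝ, deriv p t = -gradient (fun x => H (x, p t, t)) (q t) := by
  exact jacobi_aux H hH S hS hHJE q hq hchar p hp
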